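/- Let a ∈ F with a ≠ 0 and a ≠ 1, let c ∈ {0,1} ⊆ F be the image of the natural number m in F (so c = 0 if m is even and c = 1 if m is odd), and set C = χ_n(μ·ā·a⁻¹) − χ_n(μ·(ā+1)·(a+1)⁻¹) ∈ ℤ. Then W_g(a) = 2^(m−1)·(C − 2) if Tr_n(a) = c and Tr_m(a·ā) = 0; W_g(a) = 2^(m−1)·(C + 2) if Tr_n(a) = c and Tr_m(a·ā) = 1; and W_g(a) = 2^(m−1)·C if Tr_n(a) ≠ c. -/

import Mathlib

open Finset

/-- Absolute trace-style sum `Tr_n : F → F` for `n = 2m`. -/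
def trN (m : ℕ) {F : Type*} [Field F] (x : F) : F :=
  ∑ i ∈ Finset.range (2 * m), x ^ (2 ^ i)

/-- Trace-style sum `Tr_m : F → F` (meant for elements of the subfield `K`). -/
def trM (m : ℕ) {F : Type*} [Field F] (x : F) : F :=
  ∑ i ∈ Finset.range m, x ^ (2 ^ i)

/-- `ε(0) = 1`, `ε(t) = -1` for `t ≠ 0`. -/
def eps {F : Type*} [Field F] [DecidableEq F] (t : F) : ℤ :=
  if t = 0 then 1 else -1

set_option linter.unusedSectionVars false

section Basics
variable {F : Type*} [Field F] [Fintype F] [DecidableEq F] (m : ℕ) (hm : 0 < m)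
  (hcard : Fintype.card F = 2 ^ (2 * m))

include hm hcard in
lemma two_eq_zero : (2 : F) = 0 := by
  have h := FiniteField.cast_card_eq_zero F
  rw [hcard] at h
  push_cast at h
  exact pow_eq_zero_iff (Nat.mul_pos two_pos hm).ne' |>.mp h

include hm hcard in
lemma charp : CharP F 2 := by
  have h2 : (2 : F) = 0 := two_eq_zero m hm hcard
  have hd : ringChar F ∣ 2 := ringChar.dvd h2
  have hne : ringChar F ≠ 0 := CharP.char_ne_zero_of_finite F (ringChar F)
  have hne1 : ringChar F ≠ 1 := CharP.ringChar_ne_one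
  have he : ringChar F = 2 := by
    rcases (Nat.le_of_dvd (by norm_num) hd).lt_or_eq with h | h
    · omega
    · exact h
  rw [← he]; exact ringChar.charP F

include hcard in
lemma pow_card_eq (x : F) : x ^ (2 ^ (2 * m)) = x := by
  rw [← hcard]; exact FiniteField.pow_card x

variable [CharP F 2]

lemma addsq (x y : F) (k : ℕ) : (x + y) ^ (2 ^ k) = x ^ (2 ^ k) + y ^ (2 ^ k) :=
  add_pow_char_pow ..

lemma addself (x : F) : x + x = 0 := CharTwo.add_self_eq_zero x

lemma sq_inj {x y : F} (h : x ^ 2 = y ^ 2) : x = y := by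
  apply frobenius_inj F 2
  simpa [frobenius_def] using h

lemma trN_add (x y : F) : trN m (x + y) = trN m x + trN m y := by
  unfold trN
  rw [← Finset.sum_add_distrib]
  exact Finset.sum_congr rfl fun i _ => addsq x y i

lemma trM_add (x y : F) : trM m (x + y) = trM m x + trM m y := by
  unfold trM
  rw [← Finset.sum_add_distrib]
  exact Finset.sum_congr rfl fun i _ => addsq x y i

lemma trN_zero : trN m (0 : F) = 0 := by
  unfold trN
  exact Finset.sum_eq_zero fun i _ => zero_pow (pow_pos two_pos i).ne'

lemma trM_zero : trM m (0 : F) = 0 := by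
  unfold trM
  exact Finset.sum_eq_zero fun i _ => zero_pow (pow_pos two_pos i).ne'

include hcard in
lemma trN_sq (x : F) : trN m (x ^ 2) = trN m x := by
  unfold trN
  have h1 : ∀ i : ℕ, (x ^ 2) ^ (2 ^ i) = x ^ (2 ^ (i + 1)) := fun i => by
    rw [← pow_mul, pow_succ, mul_comm (2^i) 2, pow_mul]
  have e1 : ∑ i ∈ Finset.range (2*m+1), x^(2^i)
      = (∑ i ∈ Finset.range (2*m), x^(2^(i+1))) + x^(2^0) :=
    Finset.sum_range_succ' (fun i => x ^ (2^i)) (2*m)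
  have e2 : ∑ i ∈ Finset.range (2*m+1), x^(2^i)
      = (∑ i ∈ Finset.range (2*m), x^(2^i)) + x^(2^(2*m)) :=
    Finset.sum_range_succ (fun i => x ^ (2^i)) (2*m)
  have e3 : x ^ (2^(2*m)) = x := pow_card_eq m hcard x
  have e4 : x ^ (2^0 : ℕ) = x := by norm_num
  calc ∑ i ∈ Finset.range (2 * m), (x ^ 2) ^ 2 ^ i
      = ∑ i ∈ Finset.range (2*m), x^(2^(i+1)) := Finset.sum_congr rfl fun i _ => h1 i
    _ = ∑ i ∈ Finset.range (2*m), x^(2^i) := by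
        have := e1.symm.trans e2
        rw [e3, e4] at this
        exact add_right_cancel this

include hcard in
lemma trN_pow2 (x : F) (j : ℕ) : trN m (x ^ (2 ^ j)) = trN m x := by
  induction j with
  | zero => norm_num
  | succ k ih =>
      have : x ^ (2 ^ (k+1)) = (x ^ (2^k)) ^ 2 := by
        rw [← pow_mul, pow_succ]
      rw [this, trN_sq m hcard, ih]


-- trN is boolean
include hcard in
lemma trN_bool (x : F) : trN m x * trN m x = trN m x := by
  have hsq : (trN m x) ^ 2 = trN m (x ^ 2) := by
    unfold trN
    have h := map_sum (frobenius F 2) (fun i => x ^ 2 ^ i) (Finset.range (2*m))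
    simp only [frobenius_def] at h
    rw [h]
    exact Finset.sum_congr rfl fun i _ => by rw [← pow_mul, ← pow_mul, mul_comm]
  have := hsq.trans (trN_sq m hcard x)
  rw [sq] at this
  exact this

-- trM is boolean on K
lemma trM_bool {x : F} (hx : x ^ (2 ^ m) = x) : trM m x * trM m x = trM m x := by
  have hsq : (trM m x) ^ 2 = ∑ i ∈ Finset.range m, x ^ (2 ^ (i+1)) := by
    unfold trM
    have h := map_sum (frobenius F 2) (fun i => x ^ 2 ^ i) (Finset.range m)
    simp only [frobenius_def] at h
    rw [h]
    exact Finset.sum_congr rfl fun i _ => by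
      rw [← pow_mul, pow_succ]
  have e1 : ∑ i ∈ Finset.range (m+1), x^(2^i)
      = (∑ i ∈ Finset.range m, x^(2^(i+1))) + x^(2^0) :=
    Finset.sum_range_succ' (fun i => x ^ (2^i)) m
  have e2 : ∑ i ∈ Finset.range (m+1), x^(2^i)
      = (∑ i ∈ Finset.range m, x^(2^i)) + x^(2^m) :=
    Finset.sum_range_succ (fun i => x ^ (2^i)) m
  rw [hx] at e2
  have e4 : x ^ (2^0 : ℕ) = x := by norm_num
  rw [e4] at e1
  have : (trM m x) ^ 2 = trM m x := by
    rw [hsq]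
    have := e1.symm.trans e2
    exact add_right_cancel this
  rw [sq] at this
  exact this

-- boolean means 0 or 1
lemma bool_cases {t : F} (h : t * t = t) : t = 0 ∨ t = 1 := by
  have h0 : t * (t - 1) = 0 := by linear_combination h
  rcases mul_eq_zero.mp h0 with h1 | h1
  · exact Or.inl h1
  · exact Or.inr (by linear_combination h1)

include hcard in
lemma trN_eq_trM (x : F) : trN m x = trM m (x + x ^ (2 ^ m)) := by
  have key : trN m x = (∑ i ∈ Finset.range m, x ^ (2^i)) +
      ∑ i ∈ Finset.range m, (x ^ (2^m)) ^ (2^i) := by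
    unfold trN
    rw [two_mul, Finset.sum_range_add]
    congr 1
    exact Finset.sum_congr rfl fun i _ => by
      rw [← pow_mul, ← pow_add]
  rw [key, trM_add]
  rfl

lemma trM_one : trM m (1 : F) = (m : F) := by
  unfold trM
  simp

-- eps lemmas
lemma eps_zero : eps (0 : F) = 1 := if_pos rfl

lemma eps_one : eps (1 : F) = -1 := if_neg one_ne_zero

lemma eps_add_bool {s t : F} (hs : s * s = s) (ht : t * t = t) :
    eps (s + t) = eps s * eps t := by
  rcases bool_cases hs with h | h <;> rcases bool_cases ht with h' | h' <;>
    subst h <;> subst h' <;>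
    simp [eps, addself (1:F), one_ne_zero]

lemma eps_add_one_bool {s : F} (hs : s * s = s) : eps (s + 1) = - eps s := by
  rcases bool_cases hs with h | h <;> subst h <;>
    simp [eps, addself (1:F), one_ne_zero]

end Basics

section Counting
variable {F : Type*} [Field F] [Fintype F] [DecidableEq F]

lemma card_filter_roots_le (p : Polynomial F) (hp : p ≠ 0) :
    (Finset.univ.filter (fun x : F => p.eval x = 0)).card ≤ p.natDegree := by
  have hsub : Finset.univ.filter (fun x : F => p.eval x = 0) ⊆ p.roots.toFinset := by
    intro x hx
    simp only [Finset.mem_filter] at hx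
    rw [Multiset.mem_toFinset, Polynomial.mem_roots hp]
    exact hx.2
  calc (Finset.univ.filter (fun x : F => p.eval x = 0)).card
      ≤ p.roots.toFinset.card := Finset.card_le_card hsub
    _ ≤ Multiset.card p.roots := p.roots.toFinset_card_le
    _ ≤ p.natDegree := p.card_roots'

lemma card_fixed_le (k : ℕ) (hk : 2 ≤ k) :
    (Finset.univ.filter (fun x : F => x ^ k = x)).card ≤ k := by
  set p : Polynomial F := Polynomial.X ^ k - Polynomial.X with hp
  have hpne : p ≠ 0 := by
    intro h
    have : p.coeff k = 0 := by rw [h]; simp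
    rw [hp] at this
    simp [Polynomial.coeff_X_pow, Polynomial.coeff_X, Ne.symm (by omega : k ≠ 1)] at this
  have hdeg : p.natDegree ≤ k := by
    refine le_trans (Polynomial.natDegree_sub_le _ _) ?_
    simp [Polynomial.natDegree_X_pow]
    omega
  have := card_filter_roots_le p hpne
  refine le_trans (le_of_eq ?_) (this.trans hdeg)
  congr 1
  ext x
  simp [hp, sub_eq_zero]

lemma card_pow_eq_le (k : ℕ) (hk : 1 ≤ k) (z : F) :
    (Finset.univ.filter (fun x : F => x ^ k = z)).card ≤ k := by
  set p : Polynomial F := Polynomial.X ^ k - Polynomial.C z with hp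
  have hpne : p ≠ 0 := by
    intro h
    have : p.coeff k = 0 := by rw [h]; simp
    rw [hp] at this
    simp only [Polynomial.coeff_sub, Polynomial.coeff_X_pow, Polynomial.coeff_C,
      if_pos rfl, if_neg (by omega : ¬ k = 0)] at this
    simp at this
  have hdeg : p.natDegree ≤ k := by
    refine le_trans (Polynomial.natDegree_sub_le _ _) ?_
    simp [Polynomial.natDegree_X_pow]
  have := card_filter_roots_le p hpne
  refine le_trans (le_of_eq ?_) (this.trans hdeg)
  congr 1
  ext x
  simp [hp, sub_eq_zero]

lemma card_trM_zero_le (m : ℕ) (hm : 0 < m) :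
    (Finset.univ.filter (fun x : F => trM m x = 0)).card ≤ 2 ^ (m - 1) := by
  set p : Polynomial F := ∑ i ∈ Finset.range m, Polynomial.X ^ (2 ^ i) with hp
  have heval : ∀ x : F, p.eval x = trM m x := by
    intro x
    rw [hp, Polynomial.eval_finset_sum]
    simp [trM]
  have hpne : p ≠ 0 := by
    intro h
    have h1 : p.coeff 1 = 0 := by rw [h]; simp
    rw [hp] at h1
    rw [Polynomial.finset_sum_coeff] at h1
    have : ∀ i ∈ Finset.range m, (Polynomial.X ^ (2^i) : Polynomial F).coeff 1
        = if i = 0 then 1 else 0 := by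
      intro i _
      rw [Polynomial.coeff_X_pow]
      by_cases h : i = 0
      · simp [h]
      · have : 2 ^ i ≠ 1 := by
          have : 1 < 2 ^ i := Nat.one_lt_two_pow h
          omega
        simp [h, this, Ne.symm this]
    rw [Finset.sum_congr rfl this, Finset.sum_ite_eq' (Finset.range m) 0 (fun _ => (1:F))] at h1
    simp [Finset.mem_range, hm] at h1
  have hdeg : p.natDegree ≤ 2 ^ (m - 1) := by
    rw [hp]
    refine Polynomial.natDegree_sum_le_of_forall_le _ _ ?_
    intro i hi
    rw [Polynomial.natDegree_X_pow]
    exact Nat.pow_le_pow_right (by norm_num) (by simp at hi; omega)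
  have := card_filter_roots_le p hpne
  refine le_trans (le_of_eq ?_) (this.trans hdeg)
  congr 1
  ext x
  simp [heval x]

end Counting

section Count2
variable {F : Type*} [Field F] [Fintype F] [DecidableEq F] (m : ℕ) (hm : 0 < m)
  (hcard : Fintype.card F = 2 ^ (2 * m))

include hcard in
lemma norm_mem (y : F) :
    (y ^ (2^m + 1)) ^ (2^m) = y ^ (2^m+1) := by
  have hq2 : y ^ (2^m * 2^m) = y := by
    rw [show 2^m * 2^m = 2^(2*m) by rw [two_mul, pow_add]]
    exact pow_card_eq m hcard y
  calc (y^(2^m+1))^(2^m) = y^((2^m+1)*2^m) := by rw [← pow_mul]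
    _ = y^(2^m*2^m) * y^(2^m) := by rw [add_mul, one_mul, pow_add]
    _ = y * y^(2^m) := by rw [hq2]
    _ = y^(2^m+1) := by rw [pow_succ, mul_comm]

include hm hcard in
lemma count_main :
    (Finset.univ.filter (fun x : F => x ^ (2^m) = x ∧ x ≠ 0)).card = 2^m - 1 ∧
    ∀ z ∈ Finset.univ.filter (fun x : F => x ^ (2^m) = x ∧ x ≠ 0),
      ((Finset.univ.filter (fun y : F => y ≠ 0)).filter
        (fun y => y ^ (2^m+1) = z)).card = 2^m + 1 := by
  classical
  set q := 2^m with hqdef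
  have hq2 : 2 ≤ q := by
    calc 2 = 2^1 := (pow_one 2).symm
    _ ≤ 2^m := Nat.pow_le_pow_right (by norm_num) hm
  set Kstar := Finset.univ.filter (fun x : F => x ^ q = x ∧ x ≠ 0) with hKdef
  set Fstar := Finset.univ.filter (fun y : F => y ≠ 0) with hFdef
  have hFcard : Fstar.card = 2^(2*m) - 1 := by
    rw [hFdef, Finset.filter_ne', Finset.card_erase_of_mem (Finset.mem_univ 0),
      Finset.card_univ, hcard]
  have hmap : ∀ y ∈ Fstar, y^(q+1) ∈ Kstar := by
    intro y hy
    rw [hFdef, Finset.mem_filter] at hy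
    rw [hKdef, Finset.mem_filter]
    exact ⟨Finset.mem_univ _, norm_mem m hcard y, pow_ne_zero _ hy.2⟩
  have hpart := Finset.card_eq_sum_card_fiberwise hmap
  have hfible : ∀ z ∈ Kstar, (Fstar.filter (fun y => y^(q+1) = z)).card ≤ q + 1 := by
    intro z _
    refine le_trans (Finset.card_le_card ?_) (card_pow_eq_le (q+1) (by omega) z)
    intro y hy
    rw [Finset.mem_filter] at hy
    rw [Finset.mem_filter]
    exact ⟨Finset.mem_univ _, hy.2⟩
  have hKle : Kstar.card + 1 ≤ q := by
    have h1 := card_fixed_le (F := F) q hq2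
    have hins : insert (0:F) Kstar = Finset.univ.filter (fun x : F => x ^ q = x) := by
      ext x
      simp only [Finset.mem_insert, hKdef, Finset.mem_filter, Finset.mem_univ, true_and]
      constructor
      · rintro (rfl | ⟨h, _⟩)
        · exact zero_pow (by omega)
        · exact h
      · intro h
        by_cases hx : x = 0
        · exact Or.inl hx
        · exact Or.inr ⟨h, hx⟩
    have h0 : (0:F) ∉ Kstar := by simp [hKdef]
    calc Kstar.card + 1 = (insert (0:F) Kstar).card := (Finset.card_insert_of_notMem h0).symm
      _ ≤ q := hins ▸ h1
  have h2m : 2^(2*m) = q * q := by rw [two_mul, pow_add]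
  have hsum_le : Fstar.card ≤ Kstar.card * (q+1) := by
    rw [hpart]
    exact le_trans (Finset.sum_le_sum hfible) (by rw [Finset.sum_const, smul_eq_mul])
  have hKcard : Kstar.card = q - 1 := by
    set k := Kstar.card with hk
    have e1 : (q*q : ℤ) - 1 ≤ k * (q+1) := by
      have : (2^(2*m) - 1 : ℕ) ≤ k * (q+1) := hFcard ▸ hsum_le
      have h1 : (1:ℕ) ≤ 2^(2*m) := Nat.one_le_two_pow
      have := Int.ofNat_le.mpr this
      push_cast [h2m] at this ⊢
      omega
    have e2 : (k:ℤ) + 1 ≤ q := by exact_mod_cast hKle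
    have : (k:ℤ) = q - 1 := by nlinarith
    omega
  refine ⟨hKcard, ?_⟩
  have hsum_eq : ∑ z ∈ Kstar, (Fstar.filter (fun y => y^(q+1) = z)).card
      = ∑ _z ∈ Kstar, (q+1) := by
    rw [Finset.sum_const, smul_eq_mul, hKcard, ← hpart, hFcard, h2m]
    refine Nat.sub_eq_of_eq_add ?_
    obtain ⟨j, hj⟩ : ∃ j, q = j + 1 := ⟨q - 1, by omega⟩
    rw [hj]
    simp only [Nat.add_sub_cancel]
    ring
  exact (Finset.sum_eq_sum_iff_of_le hfible).mp hsum_eq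

end Count2

section Balanced
variable {F : Type*} [Field F] [Fintype F] [DecidableEq F] (m : ℕ) (hm : 0 < m)
  (hcard : Fintype.card F = 2 ^ (2 * m)) [CharP F 2]

include hm hcard in
lemma Kset_card :
    (Finset.univ.filter (fun x : F => x ^ (2^m) = x)).card = 2^m := by
  have hKcard := (count_main m hm hcard).1
  have hins : insert (0:F) (Finset.univ.filter (fun x : F => x ^ (2^m) = x ∧ x ≠ 0))
      = Finset.univ.filter (fun x : F => x ^ (2^m) = x) := by
    ext x
    simp only [Finset.mem_insert, Finset.mem_filter, Finset.mem_univ, true_and]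
    constructor
    · rintro (rfl | ⟨h, _⟩)
      · exact zero_pow (by positivity)
      · exact h
    · intro h
      by_cases hx : x = 0
      · exact Or.inl hx
      · exact Or.inr ⟨h, hx⟩
  have h0 : (0:F) ∉ Finset.univ.filter (fun x : F => x ^ (2^m) = x ∧ x ≠ 0) := by simp
  have h2 : (2:ℕ) ≤ 2^m := by
    calc (2:ℕ) = 2^1 := (pow_one 2).symm
    _ ≤ 2^m := Nat.pow_le_pow_right (by norm_num) hm
  rw [← hins, Finset.card_insert_of_notMem h0, hKcard]
  omega

include hm hcard in
lemma trM_balanced :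
    ∑ z ∈ Finset.univ.filter (fun x : F => x ^ (2^m) = x), eps (trM m z) = 0 := by
  classical
  set Kset := Finset.univ.filter (fun x : F => x ^ (2^m) = x) with hK
  set K0 := Kset.filter (fun z => trM m z = 0) with hK0
  set K1 := Kset.filter (fun z => ¬ trM m z = 0) with hK1
  have hsplit : ∑ z ∈ Kset, eps (trM m z)
      = (∑ z ∈ K0, eps (trM m z)) + ∑ z ∈ K1, eps (trM m z) :=
    (Finset.sum_filter_add_sum_filter_not Kset _ _).symm
  have hs0 : ∑ z ∈ K0, eps (trM m z) = (K0.card : ℤ) := by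
    have e : ∑ z ∈ K0, eps (trM m z) = ∑ _z ∈ K0, (1:ℤ) := by
      refine Finset.sum_congr rfl fun z hz => ?_
      rw [hK0, Finset.mem_filter] at hz
      rw [hz.2, eps_zero]
    rw [e, Finset.sum_const, nsmul_eq_mul, mul_one]
  have hs1 : ∑ z ∈ K1, eps (trM m z) = -(K1.card : ℤ) := by
    have e : ∑ z ∈ K1, eps (trM m z) = ∑ _z ∈ K1, (-1:ℤ) := by
      refine Finset.sum_congr rfl fun z hz => ?_
      rw [hK1, Finset.mem_filter] at hz
      exact if_neg hz.2
    rw [e, Finset.sum_const, nsmul_eq_mul, mul_neg_one]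
  have hKsetcard : Kset.card = 2^m := Kset_card m hm hcard
  have hK0le : K0.card ≤ 2^(m-1) := by
    refine le_trans (Finset.card_le_card ?_) (card_trM_zero_le m hm)
    intro z hz
    rw [hK0, Finset.mem_filter] at hz
    rw [Finset.mem_filter]
    exact ⟨Finset.mem_univ _, hz.2⟩
  have hsum_card : K0.card + K1.card = Kset.card :=
    Finset.card_filter_add_card_filter_not _
  have hpow : 2^(m-1) < 2^m := Nat.pow_lt_pow_right (by norm_num) (by omega)
  have hK1pos : 0 < K1.card := by omega
  obtain ⟨z1, hz1⟩ := Finset.card_pos.mp hK1pos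
  have hz1' := hz1
  rw [hK1, Finset.mem_filter] at hz1'
  obtain ⟨hz1K, hz1ne⟩ := hz1'
  rw [hK, Finset.mem_filter] at hz1K
  have hz1K' : z1 ^ (2^m) = z1 := hz1K.2
  have hz1tr : trM m z1 = 1 := by
    rcases bool_cases (trM_bool m hz1K') with h | h
    · exact absurd h hz1ne
    · exact h
  -- bijection K0 ≃ K1 by adding z1
  have hmemK : ∀ w : F, w ^ (2^m) = w → (w + z1) ^ (2^m) = w + z1 := by
    intro w hw
    rw [addsq, hw, hz1K']
  have hcards : K0.card = K1.card := by
    refine Finset.card_nbij' (fun w => w + z1) (fun w => w + z1) ?_ ?_ ?_ ?_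
    · intro w hw
      rw [hK0, Finset.mem_coe, Finset.mem_filter, hK, Finset.mem_filter] at hw
      rw [hK1, Finset.mem_coe, Finset.mem_filter, hK, Finset.mem_filter]
      refine ⟨⟨Finset.mem_univ _, hmemK w hw.1.2⟩, ?_⟩
      rw [trM_add, hw.2, hz1tr, zero_add]
      exact one_ne_zero
    · intro w hw
      rw [hK1, Finset.mem_coe, Finset.mem_filter, hK, Finset.mem_filter] at hw
      rw [hK0, Finset.mem_coe, Finset.mem_filter, hK, Finset.mem_filter]
      refine ⟨⟨Finset.mem_univ _, hmemK w hw.1.2⟩, ?_⟩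
      have hwtr : trM m w = 1 := by
        rcases bool_cases (trM_bool m hw.1.2) with h | h
        · exact absurd h hw.2
        · exact h
      rw [trM_add, hwtr, hz1tr]
      exact addself 1
    · intro w _
      show w + z1 + z1 = w
      rw [add_assoc, addself, add_zero]
    · intro w _
      show w + z1 + z1 = w
      rw [add_assoc, addself, add_zero]
  rw [hsplit, hs0, hs1, hcards]
  ring

include hm hcard in
lemma sum_Kstar_eps {c : F} (hc : c ^ (2^m) = c) :
    ∑ x ∈ Finset.univ.filter (fun x : F => x ^ (2^m) = x ∧ x ≠ 0), eps (trM m (x * c))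
      = if c = 0 then ((2:ℤ)^m - 1) else -1 := by
  classical
  by_cases hc0 : c = 0
  · subst hc0
    rw [if_pos rfl]
    rw [Finset.sum_congr rfl (fun z _ => by rw [mul_zero, trM_zero, eps_zero]),
      Finset.sum_const, nsmul_eq_mul, mul_one, (count_main m hm hcard).1]
    have h2 : (2:ℕ) ≤ 2^m := by
      calc (2:ℕ) = 2^1 := (pow_one 2).symm
      _ ≤ 2^m := Nat.pow_le_pow_right (by norm_num) hm
    push_cast [Nat.cast_sub (by omega : 1 ≤ 2^m)]
    ring
  · rw [if_neg hc0]
    have key : ∑ z ∈ Finset.univ.filter (fun x : F => x ^ (2^m) = x), eps (trM m (z * c))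
        = ∑ z ∈ Finset.univ.filter (fun x : F => x ^ (2^m) = x), eps (trM m z) := by
      refine Finset.sum_nbij' (fun z => z * c) (fun z => z * c⁻¹) ?_ ?_ ?_ ?_ ?_
      · intro z hz
        rw [Finset.mem_filter] at hz ⊢
        refine ⟨Finset.mem_univ _, ?_⟩
        rw [mul_pow, hz.2, hc]
      · intro z hz
        rw [Finset.mem_filter] at hz ⊢
        refine ⟨Finset.mem_univ _, ?_⟩
        rw [mul_pow, hz.2, inv_pow, hc]
      · intro z _
        show z * c * c⁻¹ = z
        field_simp
      · intro z _
        show z * c⁻¹ * c = z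
        field_simp
      · intro z _
        rfl
    have hsum0 : ∑ z ∈ Finset.univ.filter (fun x : F => x ^ (2^m) = x), eps (trM m (z * c))
        = 0 := key.trans (trM_balanced m hm hcard)
    have hins : insert (0:F) (Finset.univ.filter (fun x : F => x ^ (2^m) = x ∧ x ≠ 0))
        = Finset.univ.filter (fun x : F => x ^ (2^m) = x) := by
      ext x
      simp only [Finset.mem_insert, Finset.mem_filter, Finset.mem_univ, true_and]
      constructor
      · rintro (rfl | ⟨h, _⟩)
        · exact zero_pow (by positivity)
        · exact h
      · intro h
        by_cases hx : x = 0
        · exact Or.inl hx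
        · exact Or.inr ⟨h, hx⟩
    have h0 : (0:F) ∉ Finset.univ.filter (fun x : F => x ^ (2^m) = x ∧ x ≠ 0) := by simp
    rw [← hins, Finset.sum_insert h0, zero_mul, trM_zero, eps_zero] at hsum0
    linarith

end Balanced

section Decomp
variable {F : Type*} [Field F] [Fintype F] [DecidableEq F] (m : ℕ) (hm : 0 < m)
  (hcard : Fintype.card F = 2 ^ (2 * m)) [CharP F 2]

lemma pow_pow_comm {G : Type*} [Monoid G] (a : G) (i j : ℕ) : (a^i)^j = (a^j)^i := by
  rw [← pow_mul, mul_comm, pow_mul]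

include hm hcard in
lemma sqrt_sq (x : F) : (x ^ (2^(2*m-1)))^2 = x := by
  rw [← pow_mul, show 2^(2*m-1)*2 = 2^(2*m) by
    rw [← pow_succ]
    congr 1
    omega]
  exact pow_card_eq m hcard x

include hm hcard in
lemma sum_Fstar_decomp (f : F → ℤ) :
    ∑ x ∈ Finset.univ.filter (fun y : F => y ≠ 0), f x
    = ∑ p ∈ (Finset.univ.filter (fun x : F => x ^ (2^m) = x ∧ x ≠ 0)) ×ˢ
        (Finset.univ.filter (fun u : F => u ^ (2^m+1) = 1)), f (p.1 * p.2) := by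
  classical
  have key : ∀ x : F, x ≠ 0 →
      ((x^(2^m+1))^(2^(2*m-1)))^2 = x^(2^m+1) ∧
      ((x^(2^m+1))^(2^(2*m-1)))^(2^m) = (x^(2^m+1))^(2^(2*m-1)) ∧
      (x^(2^m+1))^(2^(2*m-1)) ≠ 0 ∧
        (x / (x^(2^m+1))^(2^(2*m-1)))^(2^m+1) = 1 := by
    intro x hx
    have hs2 : ((x^(2^m+1))^(2^(2*m-1)))^2 = x^(2^m+1) := sqrt_sq m hm hcard _
    have hsK : ((x^(2^m+1))^(2^(2*m-1)))^(2^m) = (x^(2^m+1))^(2^(2*m-1)) := by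
      apply sq_inj
      rw [pow_pow_comm _ (2^m) 2, hs2, norm_mem m hcard x]
    have hsne : ((x^(2^m+1))^(2^(2*m-1))) ≠ 0 := by
      intro h
      apply pow_ne_zero (2^m+1) hx
      rw [← hs2, h]
      ring
    have hsq1 : ((x^(2^m+1))^(2^(2*m-1)))^(2^m+1) = x^(2^m+1) := by
      rw [pow_succ, hsK, ← sq, hs2]
    refine ⟨hs2, hsK, hsne, ?_⟩
    rw [div_pow, hsq1, div_self (pow_ne_zero _ hx)]
  refine (Finset.sum_nbij' (i := fun p : F × F => p.1 * p.2)
    (j := fun x => ((x^(2^m+1))^(2^(2*m-1)), x / (x^(2^m+1))^(2^(2*m-1)))) ?_ ?_ ?_ ?_ ?_).symm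
  · intro p hp
    rw [Finset.mem_product, Finset.mem_filter, Finset.mem_filter] at hp
    obtain ⟨⟨-, hK, hne⟩, -, hU⟩ := hp
    rw [Finset.mem_filter]
    have hune : p.2 ≠ 0 := by
      intro h
      rw [h] at hU
      simp at hU
    exact ⟨Finset.mem_univ _, mul_ne_zero hne hune⟩
  · intro x hx
    rw [Finset.mem_filter] at hx
    obtain ⟨-, hx⟩ := hx
    obtain ⟨hs2, hsK, hsne, hu⟩ := key x hx
    rw [Finset.mem_product, Finset.mem_filter, Finset.mem_filter]
    exact ⟨⟨Finset.mem_univ _, hsK, hsne⟩, Finset.mem_univ _, hu⟩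
  · intro p hp
    rw [Finset.mem_product, Finset.mem_filter, Finset.mem_filter] at hp
    obtain ⟨⟨-, hK, hne⟩, -, hU⟩ := hp
    have h1 : (p.1 * p.2)^(2^m+1) = p.1^2 := by
      rw [mul_pow, hU, mul_one, pow_succ, hK, sq]
    have h2 : ((p.1 * p.2)^(2^m+1))^(2^(2*m-1)) = p.1 := by
      rw [h1]
      exact sq_inj (sqrt_sq m hm hcard (p.1^2))
    show (((p.1 * p.2)^(2^m+1))^(2^(2*m-1)),
      (p.1*p.2) / ((p.1 * p.2)^(2^m+1))^(2^(2*m-1))) = p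
    rw [h2]
    have h3 : p.1 * p.2 / p.1 = p.2 := by
      rw [mul_comm, mul_div_assoc, div_self hne, mul_one]
    rw [h3]
  · intro x hx
    rw [Finset.mem_filter] at hx
    obtain ⟨-, hx⟩ := hx
    obtain ⟨hs2, hsK, hsne, hu⟩ := key x hx
    show (x^(2^m+1))^(2^(2*m-1)) * (x / (x^(2^m+1))^(2^(2*m-1))) = x
    rw [mul_comm, div_mul_cancel₀ _ hsne]
  · intro p _
    rfl

end Decomp

section W0
variable {F : Type*} [Field F] [Fintype F] [DecidableEq F] (m : ℕ) (hm : 0 < m)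
  (hcard : Fintype.card F = 2 ^ (2 * m)) [CharP F 2]

include hm hcard in
lemma pow_qq (b : F) : (b^(2^m))^(2^m) = b := by
  rw [← pow_mul, show 2^m*2^m = 2^(2*m) by rw [two_mul, pow_add]]
  exact pow_card_eq m hcard b

include hm hcard in
lemma sq_sqrt (z : F) : (z ^ (2^(2*m-1)))^2 = z := sqrt_sq m hm hcard z

include hm hcard in
lemma sqrt_of_sq (z : F) : (z^2) ^ (2^(2*m-1)) = z := sq_inj (sqrt_sq m hm hcard (z^2))

include hm hcard in
lemma U_card : (Finset.univ.filter (fun u : F => u ^ (2^m+1) = 1)).card = 2^m + 1 := by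
  have h1 : (1:F) ∈ Finset.univ.filter (fun x : F => x ^ (2^m) = x ∧ x ≠ 0) := by simp
  have h2 := (count_main m hm hcard).2 1 h1
  have hEq : Finset.univ.filter (fun u : F => u ^ (2^m+1) = 1)
      = (Finset.univ.filter (fun y : F => y ≠ 0)).filter (fun y => y ^ (2^m+1) = 1) := by
    ext u
    simp only [Finset.mem_filter, Finset.mem_univ, true_and]
    constructor
    · intro h
      refine ⟨?_, h⟩
      intro h0
      rw [h0, zero_pow (by positivity)] at h
      exact one_ne_zero h.symm
    · tauto
  rw [hEq]
  exact h2

include hm hcard in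
lemma sum_Kstar_sq (g : F → ℤ) :
    ∑ z ∈ Finset.univ.filter (fun x : F => x ^ (2^m) = x ∧ x ≠ 0), g (z^2)
    = ∑ z ∈ Finset.univ.filter (fun x : F => x ^ (2^m) = x ∧ x ≠ 0), g z := by
  refine Finset.sum_nbij' (i := fun z => z^2) (j := fun z => z ^ (2^(2*m-1))) ?_ ?_ ?_ ?_ ?_
  · intro z hz
    rw [Finset.mem_filter] at hz ⊢
    obtain ⟨-, hK, hne⟩ := hz
    refine ⟨Finset.mem_univ _, ?_, pow_ne_zero _ hne⟩
    rw [pow_pow_comm, hK]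
  · intro z hz
    rw [Finset.mem_filter] at hz ⊢
    obtain ⟨-, hK, hne⟩ := hz
    refine ⟨Finset.mem_univ _, ?_, pow_ne_zero _ hne⟩
    apply sq_inj
    rw [pow_pow_comm _ (2^m) 2, sq_sqrt m hm hcard, hK]
  · intro z _
    exact sqrt_of_sq m hm hcard z
  · intro z _
    exact sq_sqrt m hm hcard z
  · intro z _
    rfl

include hm hcard in
lemma G_sum :
    ∑ y : F, eps (trM m (y ^ (2^m+1))) = -(2^m : ℤ) := by
  classical
  have hsplit : ∑ y ∈ (Finset.univ : Finset F).erase 0, eps (trM m (y ^ (2^m+1)))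
      + eps (trM m ((0:F) ^ (2^m+1)))
      = ∑ y : F, eps (trM m (y ^ (2^m+1))) :=
    Finset.sum_erase_add _ _ (Finset.mem_univ 0)
  have h0 : eps (trM m ((0:F) ^ (2^m+1))) = 1 := by
    rw [zero_pow (by positivity), trM_zero, eps_zero]
  have herase : (Finset.univ : Finset F).erase 0
      = Finset.univ.filter (fun y : F => y ≠ 0) := (Finset.filter_ne' _ _).symm
  have hdec := sum_Fstar_decomp m hm hcard (fun x => eps (trM m (x ^ (2^m+1))))
  have hprod : ∑ p ∈ (Finset.univ.filter (fun x : F => x ^ (2^m) = x ∧ x ≠ 0)) ×ˢ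
        (Finset.univ.filter (fun u : F => u ^ (2^m+1) = 1)),
        eps (trM m ((p.1 * p.2) ^ (2^m+1)))
      = ((2^m : ℤ) + 1) * (-1) := by
    rw [Finset.sum_product]
    have hterm : ∀ z ∈ Finset.univ.filter (fun x : F => x ^ (2^m) = x ∧ x ≠ 0),
        ∀ u ∈ Finset.univ.filter (fun u : F => u ^ (2^m+1) = 1),
        eps (trM m ((z * u) ^ (2^m+1))) = eps (trM m (z^2)) := by
      intro z hz u hu
      rw [Finset.mem_filter] at hz hu
      congr 2
      rw [mul_pow, hu.2, mul_one, pow_succ, hz.2.1, sq]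
    calc ∑ z ∈ Finset.univ.filter (fun x : F => x ^ (2^m) = x ∧ x ≠ 0),
          ∑ u ∈ Finset.univ.filter (fun u : F => u ^ (2^m+1) = 1),
          eps (trM m ((z * u) ^ (2^m+1)))
        = ∑ z ∈ Finset.univ.filter (fun x : F => x ^ (2^m) = x ∧ x ≠ 0),
          ((2^m : ℤ) + 1) * eps (trM m (z^2)) := by
          refine Finset.sum_congr rfl fun z hz => ?_
          rw [Finset.sum_congr rfl (hterm z hz), Finset.sum_const, nsmul_eq_mul,
            U_card m hm hcard]
          push_cast
          ring
      _ = ((2^m : ℤ) + 1) * ∑ z ∈ Finset.univ.filter (fun x : F => x ^ (2^m) = x ∧ x ≠ 0),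
            eps (trM m (z^2)) := by rw [Finset.mul_sum]
      _ = ((2^m : ℤ) + 1) * (-1) := by
          rw [sum_Kstar_sq m hm hcard (fun z => eps (trM m z))]
          have := sum_Kstar_eps m hm hcard (c := (1:F)) (one_pow _)
          rw [if_neg one_ne_zero] at this
          simp only [mul_one] at this
          rw [this]
  rw [← hsplit, h0, herase, hdec, hprod]
  ring
end W0

section W0val
variable {F : Type*} [Field F] [Fintype F] [DecidableEq F] (m : ℕ) (hm : 0 < m)
  (hcard : Fintype.card F = 2 ^ (2 * m)) [CharP F 2]

include hm hcard in
lemma W0_val (l : F) (hl : l + l^(2^m) = 1) (b : F) :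
    ∑ x : F, eps (trN m (l * x^(2^m+1)) + trN m (b * x))
      = -(2^m : ℤ) * eps (trM m (b * b^(2^m))) := by
  classical
  have hbb : (b * b^(2^m))^(2^m) = b * b^(2^m) := by
    rw [mul_pow, pow_qq m hm hcard, mul_comm]
  have harg : ∀ x : F, trN m (l * x^(2^m+1)) + trN m (b*x)
      = trM m ((x + b^(2^m))^(2^m+1)) + trM m (b * b^(2^m)) := by
    intro x
    have hA : trN m (l * x^(2^m+1)) = trM m (x^(2^m+1)) := by
      rw [trN_eq_trM m hcard]
      congr 1
      rw [mul_pow, norm_mem m hcard x]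
      linear_combination (x^(2^m+1)) * hl
    have hB : trN m (b*x) = trM m (b*x + b^(2^m) * x^(2^m)) := by
      rw [trN_eq_trM m hcard]
      congr 1
      rw [mul_pow]
    rw [hA, hB, ← trM_add, ← trM_add]
    congr 1
    have hybar : (x + b^(2^m))^(2^m) = x^(2^m) + b := by
      rw [addsq, pow_qq m hm hcard]
    have hN : (x + b^(2^m))^(2^m+1) = (x + b^(2^m))^(2^m) * (x + b^(2^m)) := pow_succ _ _
    have hx1 : x^(2^m+1) = x^(2^m) * x := pow_succ _ _
    have h2 : (2:F) = 0 := CharP.cast_eq_zero F 2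
    rw [hN, hybar, hx1]
    linear_combination (-(b * b^(2^m))) * h2
  have hterm : ∀ x : F, eps (trN m (l * x^(2^m+1)) + trN m (b*x))
      = eps (trM m ((x + b^(2^m))^(2^m+1))) * eps (trM m (b * b^(2^m))) := by
    intro x
    rw [harg x]
    exact eps_add_bool (trM_bool m (norm_mem m hcard (x + b^(2^m)))) (trM_bool m hbb)
  calc ∑ x : F, eps (trN m (l * x^(2^m+1)) + trN m (b * x))
      = ∑ x : F, eps (trM m ((x + b^(2^m))^(2^m+1))) * eps (trM m (b * b^(2^m))) :=
        Finset.sum_congr rfl fun x _ => hterm x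
    _ = (∑ x : F, eps (trM m ((x + b^(2^m))^(2^m+1)))) * eps (trM m (b * b^(2^m))) :=
        (Finset.sum_mul _ _ _).symm
    _ = (∑ y : F, eps (trM m (y^(2^m+1)))) * eps (trM m (b * b^(2^m))) := by
        congr 1
        exact Fintype.sum_equiv (Equiv.addRight (b^(2^m)))
          (fun x => eps (trM m ((x + b^(2^m))^(2^m+1))))
          (fun y => eps (trM m (y^(2^m+1)))) (fun x => rfl)
    _ = -(2^m : ℤ) * eps (trM m (b * b^(2^m))) := by rw [G_sum m hm hcard]

end W0val

section W1val
variable {F : Type*} [Field F] [Fintype F] [DecidableEq F] (m : ℕ) (hm : 0 < m)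
  (hcard : Fintype.card F = 2 ^ (2 * m)) [CharP F 2]

include hm hcard in
lemma U_inv_sq_sum (g : F → ℤ) :
    ∑ u ∈ Finset.univ.filter (fun u : F => u^(2^m+1) = 1), g ((u^2)⁻¹)
    = ∑ u ∈ Finset.univ.filter (fun u : F => u^(2^m+1) = 1), g u := by
  refine Finset.sum_nbij' (i := fun u => (u^2)⁻¹) (j := fun v => (v⁻¹)^(2^(2*m-1)))
    ?_ ?_ ?_ ?_ ?_
  · intro u hu
    rw [Finset.mem_filter] at hu ⊢
    refine ⟨Finset.mem_univ _, ?_⟩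
    rw [inv_pow, ← pow_mul, mul_comm 2 (2^m+1), pow_mul, hu.2, one_pow, inv_one]
  · intro v hv
    rw [Finset.mem_filter] at hv ⊢
    refine ⟨Finset.mem_univ _, ?_⟩
    rw [pow_pow_comm, inv_pow, hv.2, inv_one, one_pow]
  · intro u _
    show ((u^2)⁻¹)⁻¹ ^ (2^(2*m-1)) = u
    rw [inv_inv]
    exact sqrt_of_sq m hm hcard u
  · intro v _
    show (((v⁻¹) ^ (2^(2*m-1)))^2)⁻¹ = v
    rw [sq_sqrt m hm hcard, inv_inv]
  · intro u _
    rfl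

include hm hcard in
lemma W1_val (μ : F) (hμK : μ^(2^m) = μ) (b : F) (hb : b ≠ 0) :
    ∑ x : F, eps (trN m (μ * x^(2^m-1)) + trN m (b * x))
      = 1 + (2^m:ℤ) * eps (trN m (μ * b^(2^m) * b⁻¹))
        - ∑ u ∈ Finset.univ.filter (fun u : F => u^(2^m+1) = 1), eps (trN m (μ * u)) := by
  classical
  have h1q : 1 ≤ 2^m := Nat.one_le_two_pow
  have h2 : (2:F) = 0 := CharP.cast_eq_zero F 2
  -- split off x = 0
  have hsplit : ∑ x ∈ (Finset.univ : Finset F).erase 0,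
        eps (trN m (μ * x^(2^m-1)) + trN m (b * x))
      + eps (trN m (μ * (0:F)^(2^m-1)) + trN m (b * 0))
      = ∑ x : F, eps (trN m (μ * x^(2^m-1)) + trN m (b * x)) :=
    Finset.sum_erase_add _ _ (Finset.mem_univ 0)
  have h0 : eps (trN m (μ * (0:F)^(2^m-1)) + trN m (b * 0)) = 1 := by
    rw [zero_pow (by have : 2 ≤ 2^m := Nat.one_lt_two_pow_iff.mpr (by omega); omega), mul_zero, mul_zero, trN_zero, add_zero, eps_zero]
  have herase : (Finset.univ : Finset F).erase 0
      = Finset.univ.filter (fun y : F => y ≠ 0) := (Finset.filter_ne' _ _).symm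
  -- decompose
  have hdec := sum_Fstar_decomp m hm hcard
    (fun x => eps (trN m (μ * x^(2^m-1)) + trN m (b * x)))
  -- the special point u0
  set u0 : F := (b^(2^m) * b⁻¹)^(2^(2*m-1)) with hu0def
  have hbq1 : (b^(2^m) * b⁻¹)^(2^m+1) = 1 := by
    rw [mul_pow, pow_pow_comm _ (2^m) (2^m+1), norm_mem m hcard b, inv_pow,
      mul_inv_eq_one₀ (pow_ne_zero _ hb)]
  have hu0U : u0 ∈ Finset.univ.filter (fun u : F => u^(2^m+1) = 1) := by
    rw [Finset.mem_filter]
    refine ⟨Finset.mem_univ _, ?_⟩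
    rw [hu0def, pow_pow_comm, hbq1, one_pow]
  have hu0sq : u0^2 = b^(2^m) * b⁻¹ := sq_sqrt m hm hcard _
  -- per-term evaluation on the product
  have hperm : ∀ u ∈ Finset.univ.filter (fun u : F => u^(2^m+1) = 1),
      ∀ z ∈ Finset.univ.filter (fun x : F => x ^ (2^m) = x ∧ x ≠ 0),
      eps (trN m (μ * (z*u)^(2^m-1)) + trN m (b * (z*u)))
        = eps (trN m (μ * (u^2)⁻¹)) * eps (trM m (z * (b*u + b^(2^m) * u^(2^m)))) := by
    intro u hu z hz
    rw [Finset.mem_filter] at hu hz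
    obtain ⟨-, hU⟩ := hu
    obtain ⟨-, hzK, hzne⟩ := hz
    have hune : u ≠ 0 := by
      intro h
      rw [h, zero_pow (by positivity)] at hU
      exact one_ne_zero hU.symm
    have hz1 : z^(2^m-1) = 1 := by
      have e : z^(2^m-1) * z = 1 * z := by
        rw [← pow_succ, show 2^m-1+1 = 2^m by omega, hzK, one_mul]
      exact mul_right_cancel₀ hzne e
    have hui : u^(2^m-1) = (u^2)⁻¹ := by
      refine eq_inv_of_mul_eq_one_left ?_
      rw [← pow_add, show 2^m-1+2 = 2^m+1 by omega, hU]
    have hzu : (z*u)^(2^m-1) = (u^2)⁻¹ := by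
      rw [mul_pow, hz1, hui, one_mul]
    have hbzu : trN m (b * (z*u)) = trM m (z * (b*u + b^(2^m) * u^(2^m))) := by
      rw [trN_eq_trM m hcard]
      congr 1
      rw [mul_pow, mul_pow, hzK]
      ring
    rw [hzu, hbzu]
    refine eps_add_bool (trN_bool m hcard _) (trM_bool m ?_)
    rw [mul_pow, addsq, mul_pow, mul_pow, pow_qq m hm hcard, pow_qq m hm hcard, hzK]
    ring
  -- c_u = 0 iff u = u0
  have h2q : 2 ≤ 2^m := by
    calc (2:ℕ) = 2^1 := (pow_one 2).symm
    _ ≤ 2^m := Nat.pow_le_pow_right (by norm_num) hm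
  have hcu : ∀ u ∈ Finset.univ.filter (fun u : F => u^(2^m+1) = 1),
      ((b*u + b^(2^m) * u^(2^m) = 0) ↔ u = u0) := by
    intro u hu
    rw [Finset.mem_filter] at hu
    obtain ⟨-, hU⟩ := hu
    have hune : u ≠ 0 := by
      intro h
      rw [h, zero_pow (by positivity)] at hU
      exact one_ne_zero hU.symm
    have huq : u^(2^m) = u⁻¹ := by
      have e : u^(2^m) * u = u⁻¹ * u := by
        rw [← pow_succ, hU, inv_mul_cancel₀ hune]
      exact mul_right_cancel₀ hune e
    have hkey : (b*u + b^(2^m) * u^(2^m)) * u = b * u^2 + b^(2^m) := by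
      rw [huq]
      field_simp
    constructor
    · intro h
      have e2 : b * u^2 + b^(2^m) = 0 := by rw [← hkey, h, zero_mul]
      have e3 : b * u^2 = b^(2^m) := by
        linear_combination e2 - addself (b^(2^m))
      have hsq : u^2 = b^(2^m) * b⁻¹ := by
        field_simp
        linear_combination e3
      rw [← hu0sq] at hsq
      exact sq_inj hsq
    · intro h
      have e2 : b * u^2 + b^(2^m) = 0 := by
        rw [h, hu0sq]
        have e : b * (b^(2^m) * b⁻¹) = b^(2^m) := by
          field_simp
        rw [e]
        exact addself _
      have e4 : (b*u + b^(2^m)*u^(2^m)) * u = 0 := by rw [hkey, e2]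
      rcases mul_eq_zero.mp e4 with h5 | h5
      · exact h5
      · exact absurd h5 hune
  have hD := U_inv_sq_sum m hm hcard (fun w => eps (trN m (μ * w)))
  have hchi0 : eps (trN m (μ * (u0^2)⁻¹)) = eps (trN m (μ * b^(2^m) * b⁻¹)) := by
    rw [hu0sq]
    congr 1
    have e : μ * (b^(2^m) * b⁻¹)⁻¹ = (μ * b^(2^m) * b⁻¹)^(2^m) := by
      rw [mul_pow, mul_pow, inv_pow, pow_qq m hm hcard, hμK]
      field_simp
    rw [e, trN_pow2 m hcard]
  have hFsum : ∑ x ∈ Finset.univ.filter (fun y : F => y ≠ 0),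
      eps (trN m (μ * x^(2^m-1)) + trN m (b * x))
      = (2^m:ℤ) * eps (trN m (μ * b^(2^m) * b⁻¹))
        - ∑ u ∈ Finset.univ.filter (fun u : F => u^(2^m+1) = 1), eps (trN m (μ * u)) := by
    rw [hdec, Finset.sum_product_right]
    have step1 : ∀ u ∈ Finset.univ.filter (fun u : F => u^(2^m+1) = 1),
        ∑ z ∈ Finset.univ.filter (fun x : F => x ^ (2^m) = x ∧ x ≠ 0),
          eps (trN m (μ * (z*u)^(2^m-1)) + trN m (b * (z*u)))
        = eps (trN m (μ*(u^2)⁻¹)) * (if u = u0 then (2:ℤ)^m - 1 else -1) := by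
      intro u hu
      rw [Finset.sum_congr rfl (fun z hz => hperm u hu z hz), ← Finset.mul_sum]
      have hcK : (b*u + b^(2^m)*u^(2^m))^(2^m) = b*u + b^(2^m)*u^(2^m) := by
        rw [addsq, mul_pow, mul_pow, pow_qq m hm hcard, pow_qq m hm hcard]
        ring
      rw [sum_Kstar_eps m hm hcard hcK]
      congr 1
      exact if_congr (hcu u hu) rfl rfl
    have step2 : ∀ u ∈ Finset.univ.filter (fun u : F => u^(2^m+1) = 1),
        eps (trN m (μ*(u^2)⁻¹)) * (if u = u0 then (2:ℤ)^m - 1 else -1)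
        = -eps (trN m (μ*(u^2)⁻¹))
          + (if u = u0 then (2:ℤ)^m * eps (trN m (μ*(u^2)⁻¹)) else 0) := by
      intro u _
      by_cases h : u = u0 <;> simp [h] <;> ring
    rw [Finset.sum_congr rfl step1, Finset.sum_congr rfl step2, Finset.sum_add_distrib,
      Finset.sum_ite_eq' (Finset.univ.filter (fun u : F => u^(2^m+1) = 1)) u0
        (fun u => (2:ℤ)^m * eps (trN m (μ*(u^2)⁻¹))), if_pos hu0U, hchi0,
      Finset.sum_neg_distrib, hD]
    ring
  rw [← hsplit, h0, herase, hFsum]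
  ring

end W1val

section MoreBool
variable {F : Type*} [Field F] [Fintype F] [DecidableEq F] [CharP F 2]

lemma bool_add {s t : F} (hs : s*s = s) (ht : t*t = t) : (s+t)*(s+t) = s+t := by
  rcases bool_cases hs with h|h <;> rcases bool_cases ht with h'|h' <;>
    subst h <;> subst h' <;>
    simp [addself (1:F)]

lemma mF_cases (m : ℕ) : ((m:F)) = 0 ∨ ((m:F)) = 1 := by
  rcases Nat.even_or_odd m with ⟨k, hk⟩ | ⟨k, hk⟩
  · left
    subst hk
    push_cast
    exact addself _
  · right
    subst hk
    push_cast
    have h := addself (k : F)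
    linear_combination h

lemma mF_bool (m : ℕ) : ((m:F)) * (m:F) = (m:F) := by
  rcases mF_cases (F := F) m with h | h <;> rw [h] <;> ring

end MoreBool

/-- Kloosterman sum `k_m(μ) = ∑_{x ∈ K, x ≠ 0} χ_m(x + μ x⁻¹)`. -/
def klooM (m : ℕ) {F : Type*} [Field F] [Fintype F] [DecidableEq F] (μ : F) : ℤ :=
  ∑ x ∈ Finset.univ.filter (fun x : F => x ^ (2 ^ m) = x ∧ x ≠ 0),
    eps (trM m (x + μ * x⁻¹))

/-- Kloosterman sum over the big field: `k_n(μ) = ∑_{x ∈ F, x ≠ 0} χ_n(x + μ x⁻¹)`. -/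
def klooN (m : ℕ) {F : Type*} [Field F] [Fintype F] [DecidableEq F] (μ : F) : ℤ :=
  ∑ x ∈ Finset.univ.filter (fun x : F => x ≠ 0), eps (trN m (x + μ * x⁻¹))

/-- Walsh transform of `h : F → F` (with values in `{0,1}`) at `a`. -/
def walsh (m : ℕ) {F : Type*} [Field F] [Fintype F] [DecidableEq F] (h : F → F) (a : F) : ℤ :=
  ∑ x : F, eps (h x + trN m (a * x))

/-- The Boolean function `f_{λ,μ}(x) = Tr_n(λ x^{2^m+1}) + Tr_n(x)·Tr_n(μ x^{2^m-1})`. -/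
def fFun (m : ℕ) {F : Type*} [Field F] (l μ : F) : F → F :=
  fun x => trN m (l * x ^ (2 ^ m + 1)) + trN m x * trN m (μ * x ^ (2 ^ m - 1))

/-- The Boolean function
`g_{λ,μ}(x) = (1 + Tr_n(x))·Tr_n(λ x^{2^m+1}) + Tr_n(x)·Tr_n(μ x^{2^m-1})`. -/
def gFun (m : ℕ) {F : Type*} [Field F] (l μ : F) : F → F :=
  fun x => (1 + trN m x) * trN m (l * x ^ (2 ^ m + 1)) +
    trN m x * trN m (μ * x ^ (2 ^ m - 1))

theorem stmt18 (m : ℕ) (hm : 0 < m) (F : Type*) [Field F] [Fintype F] [DecidableEq F]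
    (hcard : Fintype.card F = 2 ^ (2 * m))
    (l : F) (hl : l + l ^ (2 ^ m) = 1)
    (μ : F) (hμK : μ ^ (2 ^ m) = μ) (hμ0 : μ ≠ 0)
    (a : F) (ha0 : a ≠ 0) (ha1 : a ≠ 1)
    (C : ℤ)
    (hC : C = eps (trN m (μ * a ^ (2 ^ m) * a⁻¹)) -
      eps (trN m (μ * (a ^ (2 ^ m) + 1) * (a + 1)⁻¹))) :
    (trN m a = (m : F) → trM m (a * a ^ (2 ^ m)) = 0 →
      walsh m (gFun m l μ) a = (2 ^ (m - 1) : ℤ) * (C - 2)) ∧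
    (trN m a = (m : F) → trM m (a * a ^ (2 ^ m)) = 1 →
      walsh m (gFun m l μ) a = (2 ^ (m - 1) : ℤ) * (C + 2)) ∧
    (trN m a ≠ (m : F) →
      walsh m (gFun m l μ) a = (2 ^ (m - 1) : ℤ) * C) := by
  classical
  haveI : CharP F 2 := charp m hm hcard
  have ha1' : a + 1 ≠ 0 := by
    intro h
    apply ha1
    linear_combination h - addself (1:F)
  have hW0a := W0_val m hm hcard l hl a
  have hW0a' := W0_val m hm hcard l hl (a+1)
  have hW1a := W1_val m hm hcard μ hμK a ha0
  have hW1a' := W1_val m hm hcard μ hμK (a+1) ha1'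
  -- pointwise identity
  have hpt : ∀ x : F, (2:ℤ) * eps (gFun m l μ x + trN m (a*x))
      = (eps (trN m (l * x^(2^m+1)) + trN m (a*x))
        + eps (trN m (l * x^(2^m+1)) + trN m ((a+1)*x)))
        + (eps (trN m (μ * x^(2^m-1)) + trN m (a*x))
        - eps (trN m (μ * x^(2^m-1)) + trN m ((a+1)*x))) := by
    intro x
    have hT : trN m ((a+1)*x) = trN m (a*x) + trN m x := by
      rw [show (a+1)*x = a*x + x by ring, trN_add]
    rcases bool_cases (trN_bool m hcard x) with e | e
    · have hg : gFun m l μ x = trN m (l * x^(2^m+1)) := by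
        unfold gFun
        rw [e]
        ring
      rw [hg, hT, e, add_zero]
      ring
    · have hg : gFun m l μ x = trN m (μ * x^(2^m-1)) := by
        unfold gFun
        rw [e, addself (1:F)]
        ring
      rw [hg, hT, e,
        show trN m (l*x^(2^m+1)) + (trN m (a*x) + 1)
          = (trN m (l*x^(2^m+1)) + trN m (a*x)) + 1 by ring,
        show trN m (μ*x^(2^m-1)) + (trN m (a*x) + 1)
          = (trN m (μ*x^(2^m-1)) + trN m (a*x)) + 1 by ring,
        eps_add_one_bool (bool_add (trN_bool m hcard _) (trN_bool m hcard _)),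
        eps_add_one_bool (bool_add (trN_bool m hcard _) (trN_bool m hcard _))]
      ring
  have hsum : (2:ℤ) * walsh m (gFun m l μ) a
      = (-(2^m : ℤ) * eps (trM m (a * a^(2^m)))
          + -(2^m : ℤ) * eps (trM m ((a+1) * (a+1)^(2^m))))
        + ((2:ℤ)^m * eps (trN m (μ * a^(2^m) * a⁻¹))
          - (2:ℤ)^m * eps (trN m (μ * (a+1)^(2^m) * (a+1)⁻¹))) := by
    unfold walsh
    rw [Finset.mul_sum, Finset.sum_congr rfl (fun x _ => hpt x),
      Finset.sum_add_distrib, Finset.sum_add_distrib, Finset.sum_sub_distrib,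
      hW0a, hW0a', hW1a, hW1a']
    ring
  -- rewrite (a+1)^(2^m)
  have habar : (a+1)^(2^m) = a^(2^m) + 1 := by
    rw [addsq, one_pow]
  -- relation between the two trM values
  have hbbK : (a * a^(2^m))^(2^m) = a * a^(2^m) := by
    rw [mul_pow, pow_qq m hm hcard, mul_comm]
  have hrel : trM m ((a+1) * (a+1)^(2^m))
      = trM m (a * a^(2^m)) + (trN m a + (m:F)) := by
    rw [habar,
      show (a+1) * (a^(2^m)+1) = (a * a^(2^m)) + ((a + a^(2^m)) + 1) by ring,
      trM_add, trM_add, trM_one, ← trN_eq_trM m hcard]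
  have hepsrel : eps (trM m ((a+1) * (a+1)^(2^m)))
      = eps (trM m (a * a^(2^m))) * eps (trN m a + (m:F)) := by
    rw [hrel]
    exact eps_add_bool (trM_bool m hbbK) (bool_add (trN_bool m hcard a) (mF_bool m))
  have hq2 : (2:ℤ)^m = 2 * 2^(m-1) := by
    rw [← pow_succ']
    congr 1
    omega
  have hC' : C = eps (trN m (μ * a ^ (2 ^ m) * a⁻¹)) -
      eps (trN m (μ * (a+1) ^ (2 ^ m) * (a + 1)⁻¹)) := by
    rw [hC, habar]
  refine ⟨?_, ?_, ?_⟩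
  · intro h1 h2
    have hs0 : trN m a + (m:F) = 0 := by
      rw [h1]
      exact addself _
    rw [hepsrel, hs0, eps_zero, mul_one, h2, eps_zero] at hsum
    apply mul_left_cancel₀ (two_ne_zero (α := ℤ))
    rw [hsum, hC', hq2]
    ring
  · intro h1 h2
    have hs0 : trN m a + (m:F) = 0 := by
      rw [h1]
      exact addself _
    rw [hepsrel, hs0, eps_zero, mul_one, h2, eps_one] at hsum
    apply mul_left_cancel₀ (two_ne_zero (α := ℤ))
    rw [hsum, hC', hq2]
    ring
  · intro h1
    have hs1 : trN m a + (m:F) ≠ 0 := by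
      intro h
      apply h1
      linear_combination h - addself ((m:F))
    have he : eps (trN m a + (m:F)) = -1 := if_neg hs1
    rw [hepsrel, he] at hsum
    apply mul_left_cancel₀ (two_ne_zero (α := ℤ))
    rw [hsum, hC', hq2]
    ring
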